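/- Let G be a simple graph on a finite vertex set X, let m ≥ 1, and suppose there exist a complex inner product space H, a unit vector w ∈ H, and vectors w_x^i ∈ H for x ∈ X and i ∈ {1,…,m} satisfying: (1) ∑_{x∈X} w_x^i = w for every i; (2) ⟨w_x^i, w_{x'}^i⟩ = 0 for every i and all x ≠ x'; (3) ⟨w_x^i, w_{x'}^j⟩ = 0 for every edge {x,x'} of G and all i,j; (4) ⟨w_x^i, w_x^j⟩ = 0 for every x and all i ≠ j. Then the matrix B indexed by X × X with entries B_{x,x'} = (1/m)·⟨∑_{i=1}^m w_x^i, ∑_{i=1}^m w_{x'}^i⟩ is Hermitian positive semidefinite, satisfies B_{x,x'} = 0 whenever x and x' are adjacent in G, trace(B) = 1, and trace(B·J) = m, where J is the all-ones matrix. (In particular β(G) ≤ ϑ(G).) -/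

import Mathlib

open Matrix
open scoped BigOperators ComplexOrder InnerProductSpace

/-- Given vectors `w_x^i` in a complex inner product space satisfying conditions
(1)-(4) for a graph `G` and `m ≥ 1` messages, the matrix
`B x x' = (1/m) ⟪∑ i, w_x^i, ∑ i, w_{x'}^i⟫` is a feasible solution for the Lovász
theta function with `trace (B * J) = m`; in particular `β(G) ≤ ϑ(G)`. -/
theorem theta_bound_of_beta_vectors
    {X : Type} [Fintype X] [DecidableEq X] (G : SimpleGraph X)
    (m : ℕ) (hm : 1 ≤ m)
    {H : Type} [NormedAddCommGroup H] [InnerProductSpace ℂ H]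
    (w : H) (hw : ‖w‖ = 1) (wv : X → Fin m → H)
    -- (1)
    (h1 : ∀ i, ∑ x, wv x i = w)
    -- (2)
    (h2 : ∀ i x x', x ≠ x' → ⟪wv x i, wv x' i⟫_ℂ = 0)
    -- (3)
    (h3 : ∀ x x', G.Adj x x' → ∀ i j, ⟪wv x i, wv x' j⟫_ℂ = 0)
    -- (4)
    (h4 : ∀ x i j, i ≠ j → ⟪wv x i, wv x j⟫_ℂ = 0)
    (B : Matrix X X ℂ)
    (hB : B = Matrix.of (fun x x' => (m : ℂ)⁻¹ * ⟪∑ i, wv x i, ∑ i, wv x' i⟫_ℂ)) :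
    B.PosSemidef ∧ (∀ x x', G.Adj x x' → B x x' = 0) ∧
      B.trace = 1 ∧ (B * Matrix.of (fun _ _ => (1 : ℂ))).trace = (m : ℂ) := by
  have hm0 : (m : ℂ) ≠ 0 := Nat.cast_ne_zero.mpr (by omega)
  set u : X → H := fun x => ∑ i, wv x i with hu
  have hBapp : ∀ x x', B x x' = (m : ℂ)⁻¹ * ⟪u x, u x'⟫_ℂ := by
    intro x x'; rw [hB]; rfl
  have husum : ∑ x, u x = (m : ℂ) • w := by
    rw [hu, Finset.sum_comm]
    simp only [h1, Finset.sum_const, Finset.card_univ, Fintype.card_fin]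
    exact (Nat.cast_smul_eq_nsmul ℂ m w).symm
  refine ⟨Matrix.PosSemidef.of_dotProduct_mulVec_nonneg ?_ ?_, ?_, ?_, ?_⟩
  · -- Hermitian
    ext x x'
    simp only [conjTranspose_apply, hBapp, star_mul', ← inner_conj_symm (u x)]
    simp
  · -- quadratic form nonneg
    intro v
    have key : star v ⬝ᵥ B *ᵥ v = (m : ℂ)⁻¹ * ⟪∑ x, v x • u x, ∑ x, v x • u x⟫_ℂ := by
      rw [sum_inner]
      simp only [inner_sum, inner_smul_left, inner_smul_right]
      simp only [dotProduct, mulVec, dotProduct, hBapp, Pi.star_apply, Finset.mul_sum,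
        Finset.sum_mul, RCLike.star_def]
      apply Finset.sum_congr rfl; intro x _
      apply Finset.sum_congr rfl; intro x' _
      ring
    rw [key]
    have hz : (0:ℂ) ≤ ⟪∑ x, v x • u x, ∑ x, v x • u x⟫_ℂ := by
      rw [Complex.le_def]
      refine ⟨by simpa using inner_self_nonneg (𝕜 := ℂ) (x := ∑ x, v x • u x), ?_⟩
      have h := inner_self_im (𝕜 := ℂ) (x := ∑ x, v x • u x)
      rw [RCLike.im_to_complex] at h
      simpa using h.symm
    have hminv : (0:ℂ) ≤ (m:ℂ)⁻¹ := by
      rw [show ((m:ℂ))⁻¹ = (((m:ℝ)⁻¹ : ℝ) : ℂ) by push_cast; ring, Complex.zero_le_real]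
      positivity
    exact mul_nonneg hminv hz
  · -- edges
    intro x x' hxx'
    rw [hBapp, hu]
    simp only [sum_inner, inner_sum]
    rw [Finset.sum_eq_zero, mul_zero]
    intro i _
    exact Finset.sum_eq_zero fun j _ => h3 x x' hxx' j i
  · -- trace = 1
    have hdiag : ∀ x, ⟪u x, u x⟫_ℂ = ∑ i, ⟪wv x i, wv x i⟫_ℂ := by
      intro x
      rw [hu]
      simp only [sum_inner, inner_sum]
      apply Finset.sum_congr rfl; intro i _
      exact Finset.sum_eq_single i (fun j _ hj => h4 x j i hj) (by simp)
    have hcol : ∀ i : Fin m, ∑ x, ⟪wv x i, wv x i⟫_ℂ = 1 := by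
      intro i
      have : ∑ x, ⟪wv x i, wv x i⟫_ℂ = ⟪∑ x, wv x i, ∑ x, wv x i⟫_ℂ := by
        rw [sum_inner]
        apply Finset.sum_congr rfl; intro x _
        rw [inner_sum]
        exact (Finset.sum_eq_single x (fun x' _ hx' => h2 i x x' (Ne.symm hx')) (by simp)).symm
      rw [this, h1, inner_self_eq_norm_sq_to_K, hw]
      norm_num
    have : B.trace = (m : ℂ)⁻¹ * ∑ x, ⟪u x, u x⟫_ℂ := by
      simp [Matrix.trace, Matrix.diag, hBapp, Finset.mul_sum]
    rw [this]
    have : ∑ x, ⟪u x, u x⟫_ℂ = (m : ℂ) := by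
      simp only [hdiag]
      rw [Finset.sum_comm]
      simp only [hcol]
      simp
    rw [this, inv_mul_cancel₀ hm0]
  · -- trace (B * J) = m
    have : (B * Matrix.of (fun _ _ => (1 : ℂ))).trace
        = (m : ℂ)⁻¹ * ⟪∑ x, u x, ∑ x, u x⟫_ℂ := by
      simp only [Matrix.trace, Matrix.diag, Matrix.mul_apply, Matrix.of_apply, mul_one, hBapp]
      rw [sum_inner]
      simp only [inner_sum]
      rw [Finset.mul_sum]
      apply Finset.sum_congr rfl; intro x _
      rw [Finset.mul_sum]
    rw [this, husum, inner_smul_left, inner_smul_right, inner_self_eq_norm_sq_to_K, hw]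
    simp only [Complex.conj_natCast, Complex.ofReal_one, one_pow, mul_one]
    field_simp
    simp
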